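/- arXiv:1402.1587 — 2 statements merged into one kernel-verified Lean document; each statement's English description precedes it below -/
import Mathlib

section
/- Let G_u be the disjoint union of graphs G_v and G_w, let I be an independent set of G_u, and let ℓ ≤ |I|. Define x = min |J ∩ V(G_v)| and y = min |J ∩ V(G_w)|, both minima over all independent sets J of G_u that are TAR_ℓ-reachable from I. Then x = max{0, ℓ − RIS_y(G_w, I ∩ V(G_w))} and y = max{0, ℓ − RIS_x(G_v, I ∩ V(G_v))}, i.e., (x, y) is an ℓ-stable tuple. -/
open Finset

variable {V : Type*}

/-- `I` is an independent set of `G`. -/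
def IsIndep (G : SimpleGraph V) (I : Finset V) : Prop :=
  ∀ u ∈ I, ∀ v ∈ I, ¬ G.Adj u v

/-- One token addition or removal between independent sets of size at least `k`. -/
def TarStep [DecidableEq V] (G : SimpleGraph V) (k : ℕ) (I J : Finset V) : Prop :=
  IsIndep G I ∧ IsIndep G J ∧ k ≤ I.card ∧ k ≤ J.card ∧
    ∃ v : V, J = insert v I ∨ I = insert v J

/-- TAR-reachability with token lower bound `k`. -/
def TarReach [DecidableEq V] (G : SimpleGraph V) (k : ℕ) (I J : Finset V) : Prop :=
  Relation.ReflTransGen (TarStep G k) I J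

/-- TAR-reachability inside the subgraph of `G` induced by `S`. -/
def TarReachOn [DecidableEq V] (G : SimpleGraph V) (S : Finset V) (k : ℕ)
    (I J : Finset V) : Prop :=
  Relation.ReflTransGen (fun I J => I ⊆ S ∧ J ⊆ S ∧ TarStep G k I J) I J

/-- The maximum size of an independent set of `G` that is TAR_k-reachable from `I`. -/
noncomputable def RIS [DecidableEq V] (G : SimpleGraph V) (k : ℕ) (I : Finset V) : ℕ :=
  sSup {m | ∃ J : Finset V, TarReach G k I J ∧ J.card = m}

/-- The maximum size of an independent set TAR_k-reachable from `I` inside the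
subgraph of `G` induced by `S`. -/
noncomputable def RISOn [DecidableEq V] (G : SimpleGraph V) (S : Finset V) (k : ℕ)
    (I : Finset V) : ℕ :=
  sSup {m | ∃ J : Finset V, TarReachOn G S k I J ∧ J.card = m}

section Aux

variable [Fintype V] [DecidableEq V] {G : SimpleGraph V}

lemma tarStep_symm {k : ℕ} {I J : Finset V} (h : TarStep G k I J) :
    TarStep G k J I := by
  obtain ⟨h1, h2, h3, h4, v, h5 | h5⟩ := h
  exacts [⟨h2, h1, h4, h3, v, Or.inr h5⟩, ⟨h2, h1, h4, h3, v, Or.inl h5⟩]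

lemma indep_subset {I J : Finset V} (h : J ⊆ I) (hI : IsIndep G I) :
    IsIndep G J := fun u hu v hv => hI u (h hu) v (h hv)

lemma reach_indep_card {ℓ : ℕ} {I J : Finset V}
    (hI : IsIndep G I) (hℓ : ℓ ≤ I.card) (h : TarReach G ℓ I J) :
    IsIndep G J ∧ ℓ ≤ J.card := by
  induction h with
  | refl => exact ⟨hI, hℓ⟩
  | tail hab hbc ih => exact ⟨hbc.2.1, hbc.2.2.2.1⟩

lemma reachOn_subset {S : Finset V} {k : ℕ} {P Q : Finset V}
    (h : TarReachOn G S k P Q) (hP : P ⊆ S) : Q ⊆ S := by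
  induction h with
  | refl => exact hP
  | tail hab hbc ih => exact hbc.2.1

lemma union_indep {S : Finset V}
    (hsep : ∀ a ∈ S, ∀ b ∉ S, ¬ G.Adj a b)
    {A K : Finset V} (hA : A ⊆ S) (hK : K ⊆ Sᶜ)
    (hAi : IsIndep G A) (hKi : IsIndep G K) : IsIndep G (A ∪ K) := by
  intro u hu v hv
  rcases Finset.mem_union.1 hu with hu' | hu' <;>
    rcases Finset.mem_union.1 hv with hv' | hv'
  · exact hAi u hu' v hv'
  · exact hsep u (hA hu') v (Finset.mem_compl.1 (hK hv'))
  · intro hadj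
    exact hsep v (hA hv') u (Finset.mem_compl.1 (hK hu')) hadj.symm
  · exact hKi u hu' v hv'

lemma disjoint_of_subsets {S A K : Finset V} (hA : A ⊆ S) (hK : K ⊆ Sᶜ) :
    Disjoint A K :=
  Finset.disjoint_left.2 fun a ha hk => Finset.mem_compl.1 (hK hk) (hA ha)

/-- Projection of a TAR path onto `Sᶜ`. -/
lemma proj_reach {S : Finset V} {ℓ y : ℕ} {I : Finset V}
    (hy : ∀ K, TarReach G ℓ I K → y ≤ (K ∩ Sᶜ).card) :
    ∀ {J}, TarReach G ℓ I J → TarReachOn G Sᶜ y (I ∩ Sᶜ) (J ∩ Sᶜ) := by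
  intro J h
  induction h with
  | refl => exact .refl
  | @tail b c hab hbc ih =>
    have hbreach : TarReach G ℓ I b := hab
    have hcreach : TarReach G ℓ I c := hab.tail hbc
    obtain ⟨h1, h2, h3, h4, v, h5 | h5⟩ := hbc
    · by_cases hv : v ∈ Sᶜ
      · refine ih.tail ⟨Finset.inter_subset_right, Finset.inter_subset_right,
          indep_subset Finset.inter_subset_left h1,
          indep_subset Finset.inter_subset_left h2,
          hy b hbreach, hy c hcreach, v, Or.inl ?_⟩
        rw [h5, Finset.insert_inter_of_mem hv]
      · rw [h5, Finset.insert_inter_of_notMem hv]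
        exact ih
    · by_cases hv : v ∈ Sᶜ
      · refine ih.tail ⟨Finset.inter_subset_right, Finset.inter_subset_right,
          indep_subset Finset.inter_subset_left h1,
          indep_subset Finset.inter_subset_left h2,
          hy b hbreach, hy c hcreach, v, Or.inr ?_⟩
        rw [h5, Finset.insert_inter_of_mem hv]
      · have : b ∩ Sᶜ = c ∩ Sᶜ := by rw [h5, Finset.insert_inter_of_notMem hv]
        rw [← this]
        exact ih

/-- Lifting a TAR path on `Sᶜ` to the whole graph, keeping `A ⊆ S` fixed. -/
lemma lift_reach {S : Finset V}
    (hsep : ∀ a ∈ S, ∀ b ∉ S, ¬ G.Adj a b)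
    {A : Finset V} (hA : A ⊆ S) (hAind : IsIndep G A)
    {ℓ y : ℕ} (hℓy : ℓ ≤ A.card + y) :
    ∀ {P Q : Finset V}, TarReachOn G Sᶜ y P Q → TarReach G ℓ (A ∪ P) (A ∪ Q) := by
  intro P Q h
  induction h with
  | refl => exact .refl
  | @tail b c hab hbc ih =>
    obtain ⟨hbS, hcS, h1, h2, h3, h4, v, h5 | h5⟩ := hbc
    · refine ih.tail ⟨union_indep hsep hA hbS hAind h1,
        union_indep hsep hA hcS hAind h2, ?_, ?_, v, Or.inl ?_⟩
      · rw [Finset.card_union_of_disjoint (disjoint_of_subsets hA hbS)]; omega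
      · rw [Finset.card_union_of_disjoint (disjoint_of_subsets hA hcS)]; omega
      · rw [h5, Finset.union_insert]
    · refine ih.tail ⟨union_indep hsep hA hbS hAind h1,
        union_indep hsep hA hcS hAind h2, ?_, ?_, v, Or.inr ?_⟩
      · rw [Finset.card_union_of_disjoint (disjoint_of_subsets hA hbS)]; omega
      · rw [Finset.card_union_of_disjoint (disjoint_of_subsets hA hcS)]; omega
      · rw [h5, Finset.union_insert]

/-- Removing a subset `B` of an independent set, staying at size `≥ ℓ`. -/
lemma remove_reach {ℓ : ℕ} {M : Finset V} (hM : IsIndep G M) (hMℓ : ℓ ≤ M.card) :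
    ∀ B : Finset V, B ⊆ M → ℓ ≤ (M \ B).card → TarReach G ℓ M (M \ B) := by
  intro B
  induction B using Finset.induction_on with
  | empty =>
    intro _ _
    rw [Finset.sdiff_empty]
    exact Relation.ReflTransGen.refl
  | @insert a B ha ih =>
    intro hBM hcard
    have hBM' : B ⊆ M := (Finset.subset_insert a B).trans hBM
    have hsub : M \ insert a B ⊆ M \ B := by
      apply Finset.sdiff_subset_sdiff (le_refl M) (Finset.subset_insert a B)
    have hcard' : ℓ ≤ (M \ B).card := le_trans hcard (Finset.card_le_card hsub)
    have haM : a ∈ M := hBM (Finset.mem_insert_self a B)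
    have haMB : a ∈ M \ B := Finset.mem_sdiff.2 ⟨haM, ha⟩
    have key : M \ insert a B = (M \ B).erase a := by
      ext z
      simp only [Finset.mem_sdiff, Finset.mem_insert, Finset.mem_erase]
      tauto
    refine (ih hBM' hcard').tail ?_
    rw [key]
    refine ⟨indep_subset (Finset.sdiff_subset) hM,
      indep_subset ((Finset.erase_subset a _).trans Finset.sdiff_subset) hM,
      hcard', ?_, a, Or.inr ?_⟩
    · rw [← key]; exact hcard
    · rw [Finset.insert_erase haMB]

lemma risOn_bddAbove {S : Finset V} {k : ℕ} {I : Finset V} :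
    BddAbove {m | ∃ J : Finset V, TarReachOn G S k I J ∧ J.card = m} :=
  ⟨Fintype.card V, fun m ⟨J, _, hJ⟩ => hJ ▸ J.card_le_univ⟩

lemma le_risOn {S : Finset V} {k : ℕ} {I J : Finset V}
    (h : TarReachOn G S k I J) : J.card ≤ RISOn G S k I :=
  le_csSup risOn_bddAbove ⟨J, h, rfl⟩

lemma risOn_mem {S : Finset V} {k : ℕ} {I : Finset V} :
    ∃ J : Finset V, TarReachOn G S k I J ∧ J.card = RISOn G S k I :=
  Nat.sSup_mem (s := {m | ∃ J : Finset V, TarReachOn G S k I J ∧ J.card = m})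
    ⟨I.card, I, Relation.ReflTransGen.refl, rfl⟩ risOn_bddAbove

/-- The key one-sided statement. -/
lemma key_eq (G : SimpleGraph V)
    (S : Finset V) (hsep : ∀ a ∈ S, ∀ b ∉ S, ¬ G.Adj a b)
    (I : Finset V) (hI : IsIndep G I) (ℓ : ℕ) (hℓ : ℓ ≤ I.card) (x y : ℕ)
    (hx : IsLeast {m | ∃ J : Finset V, TarReach G ℓ I J ∧ (J ∩ S).card = m} x)
    (hy : IsLeast {m | ∃ J : Finset V, TarReach G ℓ I J ∧ (J ∩ Sᶜ).card = m} y) :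
    x = ℓ - RISOn G Sᶜ y (I ∩ Sᶜ) := by
  set R := RISOn G Sᶜ y (I ∩ Sᶜ) with hR
  have hy_mono : ∀ K, TarReach G ℓ I K → y ≤ (K ∩ Sᶜ).card :=
    fun K hK => hy.2 ⟨K, hK, rfl⟩
  have hyR : y ≤ R := le_trans (hy_mono I Relation.ReflTransGen.refl) (le_risOn Relation.ReflTransGen.refl)
  have card_split : ∀ J : Finset V, (J ∩ S).card + (J ∩ Sᶜ).card = J.card := by
    intro J
    rw [← Finset.sdiff_eq_inter_compl]
    exact Finset.card_inter_add_card_sdiff J S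
  -- lower bound : ℓ - R ≤ x
  have hlow : ℓ - R ≤ x := by
    obtain ⟨J, hJreach, hJx⟩ := hx.1
    have hJcard : ℓ ≤ J.card := (reach_indep_card hI hℓ hJreach).2
    have hproj : TarReachOn G Sᶜ y (I ∩ Sᶜ) (J ∩ Sᶜ) := proj_reach hy_mono hJreach
    have h1 : (J ∩ Sᶜ).card ≤ R := le_risOn hproj
    have h2 := card_split J
    omega
  -- upper bound : x ≤ ℓ - R
  have hupp : x ≤ ℓ - R := by
    obtain ⟨J₀, hJ₀reach, hJ₀y⟩ := hy.1
    obtain ⟨hJ₀ind, hJ₀card⟩ := reach_indep_card hI hℓ hJ₀reach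
    have hproj₀ : TarReachOn G Sᶜ y (I ∩ Sᶜ) (J₀ ∩ Sᶜ) := proj_reach hy_mono hJ₀reach
    have hrev : TarReachOn G Sᶜ y (J₀ ∩ Sᶜ) (I ∩ Sᶜ) :=
      (@Relation.ReflTransGen.stdSymm _ _
        ⟨fun a b h => ⟨h.2.1, h.1, tarStep_symm h.2.2⟩⟩).symm _ _ hproj₀
    obtain ⟨Jw, hJw, hJwcard⟩ := risOn_mem (G := G) (S := Sᶜ) (k := y) (I := I ∩ Sᶜ)
    have hpath : TarReachOn G Sᶜ y (J₀ ∩ Sᶜ) Jw := hrev.trans hJw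
    set A := J₀ ∩ S with hAdef
    have hA : A ⊆ S := Finset.inter_subset_right
    have hAind : IsIndep G A := indep_subset Finset.inter_subset_left hJ₀ind
    have hsplit₀ := card_split J₀
    have hAc : A.card = (J₀ ∩ S).card := by rw [hAdef]
    have hℓy : ℓ ≤ A.card + y := by omega
    have hlift : TarReach G ℓ (A ∪ (J₀ ∩ Sᶜ)) (A ∪ Jw) :=
      lift_reach hsep hA hAind hℓy hpath
    have hunion : A ∪ (J₀ ∩ Sᶜ) = J₀ := by
      rw [hAdef, ← Finset.inter_union_distrib_left, Finset.union_compl,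
        Finset.inter_univ]
    rw [hunion] at hlift
    set M := A ∪ Jw with hMdef
    have hMreach : TarReach G ℓ I M := hJ₀reach.trans hlift
    obtain ⟨hMind, hMcard⟩ := reach_indep_card hI hℓ hMreach
    have hJwS : Jw ⊆ Sᶜ := reachOn_subset hJw Finset.inter_subset_right
    have hdisj : Disjoint A Jw := disjoint_of_subsets hA hJwS
    have hMc : M.card = A.card + Jw.card := Finset.card_union_of_disjoint hdisj
    have hAR : ℓ - R ≤ A.card := by omega
    obtain ⟨B, hBA, hBcard⟩ := Finset.exists_subset_card_eq (s := A) (n := A.card - (ℓ - R)) (by omega)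
    have hBM : B ⊆ M := hBA.trans Finset.subset_union_left
    have hMB : ℓ ≤ (M \ B).card := by rw [Finset.card_sdiff_of_subset hBM]; omega
    have hremove : TarReach G ℓ M (M \ B) := remove_reach hMind hMcard B hBM hMB
    have hMS : (M \ B) ∩ S = A \ B := by
      ext z
      simp only [Finset.mem_inter, Finset.mem_sdiff, hMdef, Finset.mem_union]
      constructor
      · rintro ⟨⟨hz | hz, hzB⟩, hzS⟩
        · exact ⟨hz, hzB⟩
        · exact absurd hzS (Finset.mem_compl.1 (hJwS hz))
      · rintro ⟨hzA, hzB⟩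
        exact ⟨⟨Or.inl hzA, hzB⟩, hA hzA⟩
    have hfinal : ((M \ B) ∩ S).card = ℓ - R := by
      rw [hMS, Finset.card_sdiff_of_subset hBA]; omega
    exact hx.2 ⟨M \ B, hMreach.trans hremove, hfinal⟩
  omega

end Aux

/-- For a disjoint union (no edges between `S` and `Sᶜ`), the minimum numbers
of tokens that can be reached on the two sides form an `ℓ`-stable tuple. -/
theorem min_tokens_stable [Fintype V] [DecidableEq V] (G : SimpleGraph V)
    (S : Finset V) (hsep : ∀ a ∈ S, ∀ b ∉ S, ¬ G.Adj a b)
    (I : Finset V) (hI : IsIndep G I) (ℓ : ℕ) (hℓ : ℓ ≤ I.card) (x y : ℕ)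
    (hx : IsLeast {m | ∃ J : Finset V, TarReach G ℓ I J ∧ (J ∩ S).card = m} x)
    (hy : IsLeast {m | ∃ J : Finset V, TarReach G ℓ I J ∧ (J ∩ Sᶜ).card = m} y) :
    x = max 0 (ℓ - RISOn G Sᶜ y (I ∩ Sᶜ)) ∧
    y = max 0 (ℓ - RISOn G S x (I ∩ S)) := by
  have h1 := key_eq G S hsep I hI ℓ hℓ x y hx hy
  have hsep' : ∀ a ∈ Sᶜ, ∀ b ∉ Sᶜ, ¬ G.Adj a b := by
    intro a ha b hb hadj
    exact hsep b (by simpa using hb) a (Finset.mem_compl.1 ha) hadj.symm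
  have hx' : IsLeast {m | ∃ J : Finset V, TarReach G ℓ I J ∧ (J ∩ Sᶜᶜ).card = m} x := by
    simpa [compl_compl] using hx
  have h2 := key_eq G Sᶜ hsep' I hI ℓ hℓ y x hy hx'
  rw [compl_compl] at h2
  refine ⟨?_, ?_⟩
  · rw [Nat.zero_max]; exact h1
  · rw [Nat.zero_max]; exact h2
end

section
/- Let I be an independent set of an even-hole-free graph G, and let k ≤ |I|. Let J be an independent set of G with I TAR_k-reachable to J maximizing |J|. Then |J| = |I| if I is a dominating set of size k, and |J| = α(G) otherwise. -/
open Finset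

variable {V : Type*}

/-- `G` has an induced cycle on `n` vertices. -/
def HasInducedCycle (G : SimpleGraph V) (n : ℕ) : Prop :=
  ∃ f : ZMod n → V, Function.Injective f ∧
    ∀ i j : ZMod n, G.Adj (f i) (f j) ↔ (i = j + 1 ∨ j = i + 1)

/-- `G` is even-hole-free: it has no induced even cycle. -/
def EvenHoleFree (G : SimpleGraph V) : Prop :=
  ∀ n : ℕ, 4 ≤ n → Even n → ¬ HasInducedCycle G n

/-- `D` is a dominating set of `G`. -/
def IsDominating (G : SimpleGraph V) (D : Finset V) : Prop :=
  ∀ v : V, v ∈ D ∨ ∃ u ∈ D, G.Adj u v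

/-- The independence number of `G`. -/
noncomputable def alpha (G : SimpleGraph V) : ℕ :=
  sSup {m | ∃ J : Finset V, IsIndep G J ∧ J.card = m}

-- auxiliary lemmas

lemma tarReach_indep [DecidableEq V] {G : SimpleGraph V} {k : ℕ} {I J : Finset V}
    (h : TarReach G k I J) (hI : IsIndep G I) : IsIndep G J := by
  induction h with
  | refl => exact hI
  | tail _ hstep ih => exact hstep.2.1

lemma indep_insert [DecidableEq V] {G : SimpleGraph V} {A : Finset V} (hA : IsIndep G A) {y : V}
    (hy : ∀ u ∈ A, ¬ G.Adj u y) : IsIndep G (insert y A) := by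
  intro u hu v hv hadj
  rcases Finset.mem_insert.1 hu with hu | hu
  · rcases Finset.mem_insert.1 hv with hv | hv
    · exact G.irrefl (hu ▸ hv ▸ hadj)
    · exact hy v hv (hu ▸ hadj).symm
  · rcases Finset.mem_insert.1 hv with hv | hv
    · exact hy u hu (hv ▸ hadj)
    · exact hA u hu v hv hadj

/-- A cycle inside `S` represented as a list. -/
def IsCyc (G : SimpleGraph V) (S : Finset V) (l : List V) : Prop :=
  3 ≤ l.length ∧ l.Nodup ∧ (∀ v ∈ l, v ∈ S) ∧ l.Chain' G.Adj ∧
    ∃ h : 0 < l.length, G.Adj (l[l.length - 1]'(by omega)) (l[0]'h)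

lemma chain_adj {G : SimpleGraph V} {l : List V} (h : l.Chain' G.Adj) {i : ℕ}
    (hi : i + 1 < l.length) : G.Adj l[i] l[i + 1] := by
  rw [List.Chain', List.isChain_iff_getElem] at h
  have := h i (by omega)
  simpa using this

/-- Closing a path into a cycle when the head has a neighbour far along the path. -/
lemma close_cycle [DecidableEq V] {G : SimpleGraph V} {S : Finset V} {l : List V}
    (hnd : l.Nodup) (hmem : ∀ v ∈ l, v ∈ S) (hch : l.Chain' G.Adj)
    (hlen : 2 ≤ l.length) {w₁ w₂ : V} (hne : w₁ ≠ w₂)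
    (ha1 : G.Adj (l[0]'(by omega)) w₁) (ha2 : G.Adj (l[0]'(by omega)) w₂)
    (hw1 : w₁ ∈ l) (hw2 : w₂ ∈ l) : ∃ c, IsCyc G S c := by
  -- pick w among w₁, w₂ different from l[1]
  obtain ⟨w, hwl, hwadj⟩ : ∃ w, w ∈ l ∧ G.Adj (l[0]'(by omega)) w ∧ w ≠ l[1]'(by omega) := by
    by_cases h : w₁ = l[1]'(by omega)
    · exact ⟨w₂, hw2, ha2, fun hh => hne (h.trans hh.symm)⟩
    · exact ⟨w₁, hw1, ha1, h⟩
  obtain ⟨hwadj, hwne1⟩ := hwadj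
  have hwne0 : w ≠ l[0]'(by omega) := fun hh => G.irrefl (hh ▸ hwadj)
  obtain ⟨j, hjlt, hgetj⟩ : ∃ j, ∃ _ : j < l.length, l[j] = w :=
    ⟨l.idxOf w, List.idxOf_lt_length_iff.2 hwl, List.getElem_idxOf _⟩
  have hj0 : j ≠ 0 := by rintro rfl; exact hwne0 hgetj.symm
  have hj1 : j ≠ 1 := by rintro rfl; exact hwne1 hgetj.symm
  have hj2 : 2 ≤ j := by omega
  refine ⟨l.take (j + 1), ?_, ?_, ?_, ?_, ?_⟩
  · rw [List.length_take]; omega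
  · exact hnd.sublist (List.take_sublist _ _)
  · exact fun v hv => hmem v (List.mem_of_mem_take hv)
  · exact hch.take _
  · have hlt : (l.take (j + 1)).length = j + 1 := by rw [List.length_take]; omega
    refine ⟨by omega, ?_⟩
    have e1 : (l.take (j + 1))[(l.take (j+1)).length - 1]'(by omega) = l[j] := by
      simp_rw [hlt]
      simp [List.getElem_take]
    have e0 : (l.take (j + 1))[0]'(by omega) = l[0]'(by omega) := by
      simp [List.getElem_take]
    rw [e1, e0, hgetj]
    exact hwadj.symm

/-- Extend a path until it closes into a cycle (minimum degree 2). -/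
lemma extend_path {G : SimpleGraph V} {S : Finset V} [DecidableEq V]
    (hdeg : ∀ v ∈ S, ∃ w₁ w₂, w₁ ∈ S ∧ w₂ ∈ S ∧ w₁ ≠ w₂ ∧ G.Adj v w₁ ∧ G.Adj v w₂) :
    ∀ m (l : List V), S.card - l.length ≤ m → l.Nodup → (∀ v ∈ l, v ∈ S) →
      l.Chain' G.Adj → 2 ≤ l.length → ∃ c, IsCyc G S c := by
  intro m
  induction m with
  | zero =>
    intro l hm hnd hmem hch hlen
    have hsub : l.toFinset ⊆ S := fun v hv => hmem v (List.mem_toFinset.1 hv)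
    have hcard : l.length = S.card := by
      have := Finset.card_le_card hsub
      rw [List.toFinset_card_of_nodup hnd] at this
      omega
    -- every vertex of S is on the path: close the cycle
    have hall : ∀ w ∈ S, w ∈ l := by
      intro w hw
      by_contra hwl
      have : insert w l.toFinset ⊆ S := Finset.insert_subset hw hsub
      have := Finset.card_le_card this
      rw [Finset.card_insert_of_notMem (fun hh => hwl (List.mem_toFinset.1 hh)),
        List.toFinset_card_of_nodup hnd] at this
      omega
    obtain ⟨w₁, w₂, hw1S, hw2S, hwne, ha1, ha2⟩ := hdeg (l[0]'(by omega)) (hmem _ (List.getElem_mem _))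
    exact close_cycle hnd hmem hch hlen hwne ha1 ha2 (hall _ hw1S) (hall _ hw2S)
  | succ m ih =>
    intro l hm hnd hmem hch hlen
    obtain ⟨w₁, w₂, hw1S, hw2S, hwne, ha1, ha2⟩ := hdeg (l[0]'(by omega)) (hmem _ (List.getElem_mem _))
    by_cases hin : w₁ ∈ l ∧ w₂ ∈ l
    · exact close_cycle hnd hmem hch hlen hwne ha1 ha2 hin.1 hin.2
    · -- extend the path
      obtain ⟨w, hwS, hwadj, hwl⟩ : ∃ w, w ∈ S ∧ G.Adj (l[0]'(by omega)) w ∧ w ∉ l := by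
        rcases not_and_or.1 hin with h | h
        · exact ⟨w₁, hw1S, ha1, h⟩
        · exact ⟨w₂, hw2S, ha2, h⟩
      have hne : l ≠ [] := by intro h; rw [h] at hlen; simp at hlen
      have hlchain : (w :: l).Chain' G.Adj := by
        rw [List.Chain', List.isChain_cons]
        refine ⟨fun y hy => ?_, hch⟩
        rw [List.head?_eq_head hne] at hy
        have : y = l[0]'(by omega) := by
          cases hy
          exact (List.head_eq_getElem_zero hne)
        rw [this]
        exact hwadj.symm
      have hsub : (w :: l).toFinset ⊆ S := by
        intro v hv
        rcases List.mem_toFinset.1 hv with h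
        rcases List.mem_cons.1 h with rfl | h
        · exact hwS
        · exact hmem v h
      have hlenS : (w :: l).length ≤ S.card := by
        have := Finset.card_le_card hsub
        rwa [List.toFinset_card_of_nodup (by exact List.nodup_cons.2 ⟨hwl, hnd⟩)] at this
      refine ih (w :: l) ?_ (List.nodup_cons.2 ⟨hwl, hnd⟩) ?_ hlchain (by simp; omega)
      · simp only [List.length_cons] at hlenS ⊢
        omega
      · intro v hv
        rcases List.mem_cons.1 hv with rfl | h
        · exact hwS
        · exact hmem v h

/-- A graph containing a cycle inside the union of two independent sets has an induced
even cycle. -/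
lemma cycle_contra [DecidableEq V] {G : SimpleGraph V} (hG : EvenHoleFree G)
    {X Y : Finset V} (hd : Disjoint X Y) (hX : IsIndep G X) (hY : IsIndep G Y)
    (hdeg : ∀ v ∈ X ∪ Y, ∃ w₁ w₂, w₁ ∈ X ∪ Y ∧ w₂ ∈ X ∪ Y ∧ w₁ ≠ w₂ ∧
      G.Adj v w₁ ∧ G.Adj v w₂)
    (hne : (X ∪ Y).Nonempty) : False := by
  set S := X ∪ Y with hS
  -- edges inside S cross between X and Y
  have cross : ∀ u v : V, u ∈ S → v ∈ S → G.Adj u v → (u ∈ X ↔ v ∉ X) := by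
    intro u v hu hv hadj
    rcases Finset.mem_union.1 hu with hu' | hu' <;>
      rcases Finset.mem_union.1 hv with hv' | hv'
    · exact absurd hadj (hX u hu' v hv')
    · exact ⟨fun _ => Finset.disjoint_left.1 hd.symm hv', fun _ => hu'⟩
    · constructor
      · intro h; exact absurd h (Finset.disjoint_left.1 hd.symm hu')
      · intro h; exact absurd hadj (hY u hu' v (by
          rcases Finset.mem_union.1 hv with h' | h'
          · exact absurd h' h
          · exact h'))
    · exact absurd hadj (hY u hu' v hv')
  -- a cycle exists
  obtain ⟨v₀, hv₀⟩ := hne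
  obtain ⟨w₁, w₂, hw1, hw2, hwne, ha1, ha2⟩ := hdeg v₀ hv₀
  have hex : ∃ c, IsCyc G S c := by
    refine extend_path hdeg S.card [w₁, v₀] (by simp) ?_ ?_ ?_ (by simp)
    · simp only [List.nodup_cons, List.mem_singleton, List.not_mem_nil, not_false_iff,
        List.nodup_nil, and_true]
      exact fun h => G.irrefl (h ▸ ha1)
    · intro v hv
      rcases List.mem_cons.1 hv with rfl | hv
      · exact hw1
      · simp only [List.mem_singleton] at hv
        exact hv ▸ hv₀
    · exact List.isChain_pair.2 ha1.symm
  -- a minimum-length cycle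
  set L : Set ℕ := {m | ∃ c, IsCyc G S c ∧ c.length = m} with hL
  have hLne : L.Nonempty := by
    obtain ⟨c, hc⟩ := hex
    exact ⟨c.length, c, hc, rfl⟩
  obtain ⟨l, hl, hlen⟩ := Nat.sInf_mem hLne
  obtain ⟨hl3, hlnd, hlmem, hlch, hll0, hllast⟩ := hl
  -- no chords
  have chordless : ∀ a b : ℕ, ∀ _ : a + 2 ≤ b, ∀ _ : b < l.length, ¬(a = 0 ∧ b = l.length - 1) →
      ¬ G.Adj (l[a]'(by omega)) (l[b]'(by omega)) := by
    intro a b hab hb hnotends hadj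
    have hshort : b - a + 1 < l.length := by omega
    have h3 : 3 ≤ b - a + 1 := by omega
    set cL := (l.drop a).take (b - a + 1) with hc
    have hclen : cL.length = b - a + 1 := by
      rw [hc, List.length_take, List.length_drop]
      omega
    have hcget : ∀ i : ℕ, ∀ _ : i < b - a + 1, cL[i]'(by omega) = l[a + i]'(by omega) := by
      intro i hi
      simp only [hc, List.getElem_take, List.getElem_drop]
    have hcyc : IsCyc G S cL := by
      refine ⟨by omega, hlnd.sublist ((List.take_sublist _ _).trans (List.drop_sublist _ _)),
        fun v hv => hlmem v (((List.take_sublist _ _).trans (List.drop_sublist _ _)).mem hv),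
        (hlch.drop _).take _, by omega, ?_⟩
      have e1 : cL[cL.length - 1]'(by omega) = l[b]'(by omega) := by
        rw [hcget (cL.length - 1) (by omega)]
        congr 1
        omega
      have e0 : cL[0]'(by omega) = l[a]'(by omega) := by
        rw [hcget 0 (by omega)]
        congr 1
      rw [e1, e0]
      exact hadj.symm
    have : l.length ≤ b - a + 1 := by
      rw [hlen]
      exact Nat.sInf_le ⟨cL, hcyc, hclen⟩
    omega
  have hadjnext : ∀ a : ℕ, ∀ _ : a + 1 < l.length, G.Adj (l[a]'(by omega)) (l[a+1]'(by omega)) :=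
    fun a ha => chain_adj hlch ha
  -- adjacency characterization
  have adjch : ∀ a b : ℕ, ∀ _ : a < l.length, ∀ _ : b < l.length,
      (G.Adj (l[a]'(by omega)) (l[b]'(by omega)) ↔ (b = (a+1) % l.length ∨ a = (b+1) % l.length)) := by
    have key1 : ∀ a b : ℕ, ∀ _ : a < b, ∀ _ : b < l.length,
        G.Adj (l[a]'(by omega)) (l[b]'(by omega)) → b = a + 1 ∨ (a = 0 ∧ b = l.length - 1) := by
      intro a b hab hb hadj
      by_contra hcon
      push_neg at hcon
      obtain ⟨h1, h2⟩ := hcon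
      exact chordless a b (by omega) hb (by tauto) hadj
    intro a b ha hb
    constructor
    · intro hadj
      rcases lt_trichotomy a b with h | h | h
      · rcases key1 a b h hb hadj with h' | ⟨h1, h2⟩
        · left; rw [h']; rw [Nat.mod_eq_of_lt (by omega)]
        · right; rw [h1, h2]
          have : l.length - 1 + 1 = l.length := by omega
          rw [this, Nat.mod_self]
      · exfalso
        subst h
        exact G.irrefl hadj
      · rcases key1 b a h ha hadj.symm with h' | ⟨h1, h2⟩
        · right; rw [h']; rw [Nat.mod_eq_of_lt (by omega)]
        · left; rw [h1, h2]
          have : l.length - 1 + 1 = l.length := by omega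
          rw [this, Nat.mod_self]
    · intro h
      rcases h with h | h
      · rcases Nat.lt_or_ge (a + 1) l.length with h' | h'
        · rw [Nat.mod_eq_of_lt h'] at h
          subst h
          exact hadjnext a h'
        · have ha' : a = l.length - 1 := by omega
          have : (a + 1) % l.length = 0 := by
            have : a + 1 = l.length := by omega
            rw [this, Nat.mod_self]
          rw [this] at h
          subst h
          have : l[a]'(by omega) = l[l.length-1]'(by omega) := by congr 1
          rw [this]
          exact hllast
      · rcases Nat.lt_or_ge (b + 1) l.length with h' | h'
        · rw [Nat.mod_eq_of_lt h'] at h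
          subst h
          exact (hadjnext b h').symm
        · have hb' : b = l.length - 1 := by omega
          have : (b + 1) % l.length = 0 := by
            have : b + 1 = l.length := by omega
            rw [this, Nat.mod_self]
          rw [this] at h
          subst h
          have : l[b]'(by omega) = l[l.length-1]'(by omega) := by congr 1
          rw [this]
          exact hllast.symm
  -- parity: the cycle has even length
  have par : ∀ a : ℕ, ∀ _ : a < l.length, ((l[a]'(by omega)) ∈ X ↔ ((l[0]'(by omega)) ∈ X ↔ Even a)) := by
    intro a
    induction a with
    | zero => intro _; simp
    | succ a ih =>
      intro ha
      have ih' := ih (by omega)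
      have hcross := cross _ _ (hlmem _ (List.getElem_mem (by omega : a < l.length)))
        (hlmem _ (List.getElem_mem ha)) (hadjnext a ha)
      rw [Nat.even_add_one]
      tauto
  have hlast := cross _ _ (hlmem _ (List.getElem_mem (by omega : l.length - 1 < l.length)))
    (hlmem _ (List.getElem_mem (by omega : 0 < l.length))) hllast
  have hpar := par (l.length - 1) (by omega)
  have hnodd : ¬ Even (l.length - 1) := by tauto
  have heven : Even l.length := by
    rw [Nat.even_iff]
    rw [Nat.even_iff] at hnodd
    omega
  -- build the induced cycle
  haveI : NeZero l.length := ⟨by omega⟩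
  haveI : Fact (1 < l.length) := ⟨by omega⟩
  have zstep : ∀ i j : ZMod l.length, i = j + 1 ↔ i.val = (j.val + 1) % l.length := by
    intro i j
    constructor
    · rintro rfl
      rw [ZMod.val_add, ZMod.val_one]
    · intro h
      apply ZMod.val_injective
      rw [h, ZMod.val_add, ZMod.val_one]
  have h4 : 4 ≤ l.length := by
    rw [Nat.even_iff] at heven
    omega
  refine hG l.length h4 heven ⟨fun i : ZMod l.length => l[i.val]'(i.val_lt), ?_, ?_⟩
  · intro i j hij
    apply ZMod.val_injective
    exact (List.Nodup.getElem_inj_iff hlnd).1 hij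
  · intro i j
    rw [adjch i.val j.val i.val_lt j.val_lt, zstep i j, zstep j i]
    tauto

lemma indep_mono {G : SimpleGraph V} {A X : Finset V} (hA : IsIndep G A) (h : X ⊆ A) :
    IsIndep G X := fun u hu v hv => hA u (h hu) v (h hv)

lemma key_aux [DecidableEq V] {G : SimpleGraph V} (hG : EvenHoleFree G) :
    ∀ m (X Y : Finset V), X.card = m → Disjoint X Y → IsIndep G X → IsIndep G Y →
      X.card < Y.card →
      (∀ y ∈ Y, ∃ x₁ ∈ X, ∃ x₂ ∈ X, x₁ ≠ x₂ ∧ G.Adj x₁ y ∧ G.Adj x₂ y) → False := by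
  intro m
  induction m using Nat.strong_induction_on with
  | _ m ih =>
  intro X Y hm hd hX hY hcard hdegY
  classical
  by_cases hx : ∀ x ∈ X, ∃ y₁ ∈ Y, ∃ y₂ ∈ Y, y₁ ≠ y₂ ∧ G.Adj x y₁ ∧ G.Adj x y₂
  · refine cycle_contra hG hd hX hY ?_ ?_
    · intro v hv
      rcases Finset.mem_union.1 hv with h | h
      · obtain ⟨y₁, hy₁, y₂, hy₂, hne, h1, h2⟩ := hx v h
        exact ⟨y₁, y₂, Finset.mem_union_right _ hy₁, Finset.mem_union_right _ hy₂, hne, h1, h2⟩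
      · obtain ⟨x₁, hx₁, x₂, hx₂, hne, h1, h2⟩ := hdegY v h
        exact ⟨x₁, x₂, Finset.mem_union_left _ hx₁, Finset.mem_union_left _ hx₂, hne,
          h1.symm, h2.symm⟩
    · obtain ⟨y, hy⟩ : Y.Nonempty := Finset.card_pos.1 (by omega)
      exact ⟨y, Finset.mem_union_right _ hy⟩
  · push_neg at hx
    obtain ⟨x, hxX, hx1⟩ := hx
    have hm1 : 0 < m := by
      rw [← hm]
      exact Finset.card_pos.2 ⟨x, hxX⟩
    set N := Y.filter (fun y => G.Adj x y) with hN
    set Y' := Y.filter (fun y => ¬ G.Adj x y) with hY'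
    have hN1 : N.card ≤ 1 := by
      refine Finset.card_le_one.2 (fun a ha b hb => ?_)
      rw [hN, Finset.mem_filter] at ha hb
      by_contra hne
      exact hx1 a ha.1 b hb.1 hne ha.2 hb.2
    have hsplit : N.card + Y'.card = Y.card :=
      Finset.card_filter_add_card_filter_not (p := fun y => G.Adj x y)
    have hY'sub : Y' ⊆ Y := Finset.filter_subset _ _
    refine ih (m - 1) (by omega) (X.erase x) Y' ?_ ?_ ?_ ?_ ?_ ?_
    · rw [Finset.card_erase_of_mem hxX, hm]
    · exact hd.mono (Finset.erase_subset _ _) hY'sub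
    · exact indep_mono hX (Finset.erase_subset _ _)
    · exact indep_mono hY hY'sub
    · rw [Finset.card_erase_of_mem hxX, hm]
      omega
    · intro y hy
      have hyY : y ∈ Y := hY'sub hy
      have hynadj : ¬ G.Adj x y := (Finset.mem_filter.1 hy).2
      obtain ⟨x₁, hx₁, x₂, hx₂, hne, h1, h2⟩ := hdegY y hyY
      have hx₁' : x₁ ∈ X.erase x :=
        Finset.mem_erase.2 ⟨fun hh => hynadj (hh ▸ h1), hx₁⟩
      have hx₂' : x₂ ∈ X.erase x :=
        Finset.mem_erase.2 ⟨fun hh => hynadj (hh ▸ h2), hx₂⟩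
      exact ⟨x₁, hx₁', x₂, hx₂', hne, h1, h2⟩

/-- Key counting lemma: some vertex of the bigger side has at most one neighbour
on the smaller side. -/
lemma key [DecidableEq V] {G : SimpleGraph V} (hG : EvenHoleFree G)
    (X Y : Finset V) (hd : Disjoint X Y) (hX : IsIndep G X) (hY : IsIndep G Y)
    (hcard : X.card < Y.card) :
    ∃ y ∈ Y, ∀ x₁ ∈ X, ∀ x₂ ∈ X, G.Adj x₁ y → G.Adj x₂ y → x₁ = x₂ := by
  by_contra h
  push_neg at h
  refine key_aux hG X.card X Y rfl hd hX hY hcard (fun y hy => ?_)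
  obtain ⟨x₁, hx₁, x₂, hx₂, h1, h2, hne⟩ := h y hy
  exact ⟨x₁, hx₁, x₂, hx₂, hne, h1, h2⟩

/-- Augmentation lemma. -/
lemma aug_aux [DecidableEq V] {G : SimpleGraph V} (hG : EvenHoleFree G) {k : ℕ} :
    ∀ n (A B : Finset V), (A \ B).card = n → IsIndep G A → IsIndep G B →
      k + 1 ≤ A.card → A.card < B.card →
      ∃ A' : Finset V, TarReach G k A A' ∧ A.card < A'.card := by
  intro n
  induction n using Nat.strong_induction_on with
  | _ n ih =>
  intro A B hn hA hB hk1 hlt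
  have hdisj : Disjoint (A \ B) (B \ A) := disjoint_sdiff_sdiff
  have hcards : (A \ B).card < (B \ A).card := by
    have h1 := Finset.card_sdiff_add_card_inter A B
    have h2 := Finset.card_sdiff_add_card_inter B A
    rw [Finset.inter_comm] at h2
    omega
  obtain ⟨y, hyY, huniq⟩ := key hG (A \ B) (B \ A) hdisj
    (indep_mono hA (Finset.sdiff_subset)) (indep_mono hB (Finset.sdiff_subset)) hcards
  have hyB : y ∈ B := (Finset.mem_sdiff.1 hyY).1
  have hyA : y ∉ A := (Finset.mem_sdiff.1 hyY).2
  have hnb : ∀ u ∈ A, G.Adj u y → u ∈ A \ B := fun u hu hadj =>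
    Finset.mem_sdiff.2 ⟨hu, fun huB => hB u huB y hyB hadj⟩
  by_cases hno : ∃ x ∈ A, G.Adj x y
  · obtain ⟨x, hxA, hxadj⟩ := hno
    have hxX : x ∈ A \ B := hnb x hxA hxadj
    have huniq' : ∀ u ∈ A, G.Adj u y → u = x := fun u hu hadj =>
      huniq u (hnb u hu hadj) x hxX hadj hxadj
    set A1 : Finset V := insert y (A.erase x) with hA1def
    have hyer : y ∉ A.erase x := fun h => hyA (Finset.mem_of_mem_erase h)
    have hcarder : (A.erase x).card = A.card - 1 := Finset.card_erase_of_mem hxA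
    have hcardA1 : A1.card = A.card := by
      rw [hA1def, Finset.card_insert_of_notMem hyer, hcarder]
      omega
    have hindep1 : IsIndep G (A.erase x) := indep_mono hA (Finset.erase_subset _ _)
    have hindepA1 : IsIndep G A1 := by
      refine indep_insert hindep1 (fun u hu hadj => ?_)
      have := huniq' u (Finset.mem_of_mem_erase hu) hadj
      exact (Finset.notMem_erase x A) (this ▸ hu)
    have step1 : TarStep G k A (A.erase x) := by
      refine ⟨hA, hindep1, by omega, by omega, x, Or.inr (Finset.insert_erase hxA).symm⟩
    have step2 : TarStep G k (A.erase x) A1 := by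
      refine ⟨hindep1, hindepA1, by omega, by omega, y, Or.inl rfl⟩
    have hA1B : A1 \ B = (A \ B).erase x := by
      ext u
      simp only [hA1def, Finset.mem_sdiff, Finset.mem_insert, Finset.mem_erase]
      constructor
      · rintro ⟨rfl | ⟨hne, hu⟩, hub⟩
        · exact absurd hyB hub
        · exact ⟨hne, hu, hub⟩
      · rintro ⟨hne, hu, hub⟩
        exact ⟨Or.inr ⟨hne, hu⟩, hub⟩
    have hlt1 : (A1 \ B).card < n := by
      rw [hA1B, Finset.card_erase_of_mem hxX, hn]
      have : 0 < (A \ B).card := Finset.card_pos.2 ⟨x, hxX⟩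
      omega
    obtain ⟨A'', hr, hc⟩ := ih _ hlt1 A1 B rfl hindepA1 hB (by omega) (by omega)
    exact ⟨A'', Relation.ReflTransGen.head step1 (Relation.ReflTransGen.head step2 hr),
      by omega⟩
  · push_neg at hno
    refine ⟨insert y A, Relation.ReflTransGen.single
      ⟨hA, indep_insert hA hno, by omega, ?_, y, Or.inl rfl⟩, ?_⟩
    · rw [Finset.card_insert_of_notMem hyA]; omega
    · rw [Finset.card_insert_of_notMem hyA]; omega

/-- Augmentation lemma. -/
lemma aug [DecidableEq V] {G : SimpleGraph V} (hG : EvenHoleFree G) {k : ℕ}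
    (A B : Finset V) (hA : IsIndep G A) (hB : IsIndep G B)
    (hk1 : k + 1 ≤ A.card) (hlt : A.card < B.card) :
    ∃ A' : Finset V, TarReach G k A A' ∧ A.card < A'.card :=
  aug_aux hG _ A B rfl hA hB hk1 hlt

/-- In an even-hole-free graph, a maximum-size independent set `J` reachable
from `I` in the TAR_k model has size `|I|` if `I` is a dominating set of size
`k`, and size `α(G)` otherwise. -/
theorem even_hole_free_ris [DecidableEq V] (G : SimpleGraph V)
    (hG : EvenHoleFree G) (I : Finset V) (hI : IsIndep G I) (k : ℕ)
    (hk : k ≤ I.card) (J : Finset V) (hJ : TarReach G k I J)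
    (hmax : ∀ J' : Finset V, TarReach G k I J' → J'.card ≤ J.card) :
    (IsDominating G I ∧ I.card = k → J.card = I.card) ∧
    (¬ (IsDominating G I ∧ I.card = k) → J.card = alpha G) := by
  constructor
  · rintro ⟨hdom, hcardI⟩
    -- any reachable set equals I
    have hstuck : ∀ J' : Finset V, TarReach G k I J' → J' = I := by
      intro J' hreach
      induction hreach with
      | refl => rfl
      | @tail b c hr hstep ih =>
        rw [ih] at hstep
        obtain ⟨h1, h2, h3, h4, v, hv | hv⟩ := hstep
        · by_cases hvI : v ∈ I
          · rw [hv, Finset.insert_eq_self.2 hvI]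
          · exfalso
            rcases hdom v with hvI' | ⟨u, hu, hadj⟩
            · exact hvI hvI'
            · exact h2 u (hv ▸ Finset.mem_insert_of_mem hu) v
                (hv ▸ Finset.mem_insert_self v I) hadj
        · have hsub : c ⊆ I := by rw [hv]; exact Finset.subset_insert v c
          exact Finset.eq_of_subset_of_card_le hsub (hcardI ▸ h4)
    rw [hstuck J hJ]
  · intro hnot
    -- first : J.card ≥ k + 1
    have hJk1 : k + 1 ≤ J.card := by
      by_cases hIk : I.card = k
      · -- I is not dominating : we can add a vertex
        have hndom : ¬ IsDominating G I := fun h => hnot ⟨h, hIk⟩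
        rw [IsDominating] at hndom
        push_neg at hndom
        obtain ⟨v, hvI, hv⟩ := hndom
        have hstep : TarStep G k I (insert v I) := by
          refine ⟨hI, indep_insert hI (fun u hu h => hv u hu h), hk, ?_, v, Or.inl rfl⟩
          exact le_trans hk (Finset.card_le_card (Finset.subset_insert _ _))
        have := hmax _ (Relation.ReflTransGen.single hstep)
        rwa [Finset.card_insert_of_notMem hvI, hIk] at this
      · have := hmax I Relation.ReflTransGen.refl
        omega
    -- all independent sets have card ≤ J.card
    have hbound : ∀ B : Finset V, IsIndep G B → B.card ≤ J.card := by
      intro B hB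
      by_contra hlt
      push_neg at hlt
      obtain ⟨J'', hr, hc⟩ := aug hG J B (tarReach_indep hJ hI) hB hJk1 hlt
      exact absurd (hmax J'' (hJ.trans hr)) (by omega)
    have hJmem : J.card ∈ {m | ∃ J' : Finset V, IsIndep G J' ∧ J'.card = m} :=
      ⟨J, tarReach_indep hJ hI, rfl⟩
    have hbdd : BddAbove {m | ∃ J' : Finset V, IsIndep G J' ∧ J'.card = m} := by
      refine ⟨J.card, fun m hm => ?_⟩
      obtain ⟨B, hB, rfl⟩ := hm
      exact hbound B hB
    refine le_antisymm (le_csSup hbdd hJmem) (csSup_le ⟨J.card, hJmem⟩ ?_)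
    rintro m ⟨B, hB, rfl⟩
    exact hbound B hB
end
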